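/- Let ε be a real number with 0 < ε ≤ 2^{−24} and let β ∈ {1, 2}. Define δ_t⁺ = (1 + ε)^{β+2}/(1 − ε)^{β+3}, δ_t⁻ = (1 − ε)^{β+2}/(1 + ε)^{β+3}, δ_q⁺ = √(((δ_t⁺)² + 1)/2)·√(1 + ε), δ_q⁻ = √(((δ_t⁻)² + 1)/2)·√(1 − ε), δ_c⁻ = (1 − ε)/δ_q⁺, δ_c⁺ = (1 + ε)/δ_q⁻, δ₂₁⁻ = ((1 − ε)/(1 + ε))^{β−1} · δ_t⁻ · δ_c⁻ · (1 − ε)^β, and δ₂₁⁺ = ((1 + ε)/(1 − ε))^{β−1} · δ_t⁺ · δ_c⁺ · (1 + ε)^β. Then 1 − 19·ε ≤ δ₂₁⁻ and δ₂₁⁺ ≤ 1 + 19.00000950·ε. -/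

import Mathlib

theorem my_div_sqrt_le {a c s : ℝ} (hs : 0 < s) (ha : 0 ≤ a) (hc : 0 ≤ c)
    (h : a ^ 2 ≤ c ^ 2 * s) : a / Real.sqrt s ≤ c := by
  rw [div_le_iff₀ (Real.sqrt_pos.2 hs)]
  calc a = Real.sqrt (a ^ 2) := (Real.sqrt_sq ha).symm
    _ ≤ Real.sqrt (c ^ 2 * s) := Real.sqrt_le_sqrt h
    _ = c * Real.sqrt s := by rw [Real.sqrt_mul (sq_nonneg c), Real.sqrt_sq hc]

theorem my_le_div_sqrt {a c s : ℝ} (hs : 0 < s) (ha : 0 ≤ a) (hc : 0 ≤ c)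
    (h : c ^ 2 * s ≤ a ^ 2) : c ≤ a / Real.sqrt s := by
  rw [le_div_iff₀ (Real.sqrt_pos.2 hs)]
  calc c * Real.sqrt s = Real.sqrt (c ^ 2 * s) := by
        rw [Real.sqrt_mul (sq_nonneg c), Real.sqrt_sq hc]
    _ ≤ Real.sqrt (a ^ 2) := Real.sqrt_le_sqrt h
    _ = a := Real.sqrt_sq ha

theorem my_pow_bnd {ε : ℝ} (h0 : 0 ≤ ε) (he : ε ≤ 1 / 16777216) (p : ℕ) :
    ∀ k : ℕ, ε ^ (k + p) ≤ (1 / 16777216 : ℝ) ^ k * ε ^ p := by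
  intro k
  induction k with
  | zero => simp
  | succ n ih =>
      have h2 : ε * ε ^ (n + p) ≤ (1 / 16777216) * ((1 / 16777216 : ℝ) ^ n * ε ^ p) :=
        mul_le_mul he ih (pow_nonneg h0 _) (by norm_num)
      calc ε ^ (n + 1 + p) = ε * ε ^ (n + p) := by ring
        _ ≤ (1 / 16777216) * ((1 / 16777216 : ℝ) ^ n * ε ^ p) := h2
        _ = (1 / 16777216 : ℝ) ^ (n + 1) * ε ^ p := by ring

set_option maxHeartbeats 2000000 in
theorem offdiagonal_worst_case_bounds (ε : ℝ) (hε : 0 < ε) (hε1 : ε ≤ 2 ^ (-24 : ℤ))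
    (β : ℕ) (hβ : β = 1 ∨ β = 2) :
    1 - 19 * ε ≤
      ((1 - ε) / (1 + ε)) ^ (β - 1) * ((1 - ε) ^ (β + 2) / (1 + ε) ^ (β + 3)) *
        ((1 - ε) / (Real.sqrt ((((1 + ε) ^ (β + 2) / (1 - ε) ^ (β + 3)) ^ 2 + 1) / 2) *
          Real.sqrt (1 + ε))) * (1 - ε) ^ β ∧
    ((1 + ε) / (1 - ε)) ^ (β - 1) * ((1 + ε) ^ (β + 2) / (1 - ε) ^ (β + 3)) *
        ((1 + ε) / (Real.sqrt ((((1 - ε) ^ (β + 2) / (1 + ε) ^ (β + 3)) ^ 2 + 1) / 2) *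
          Real.sqrt (1 - ε))) * (1 + ε) ^ β ≤ 1 + 19.00000950 * ε := by
  have he : ε ≤ 1 / 16777216 := by
    rwa [show ((2:ℝ)) ^ (-24 : ℤ) = 1 / 16777216 by norm_num] at hε1
  have hA : (0:ℝ) < 1 + ε := by linarith
  have hB : (0:ℝ) < 1 - ε := by linarith
  have H1 : ∀ k : ℕ, ε ^ (k + 1) ≤ (1 / 16777216 : ℝ) ^ k * ε ^ 1 := my_pow_bnd hε.le he 1
  have H2 : ∀ k : ℕ, ε ^ (k + 2) ≤ (1 / 16777216 : ℝ) ^ k * ε ^ 2 := my_pow_bnd hε.le he 2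
  have P : ∀ k : ℕ, 0 ≤ ε ^ k := fun k => pow_nonneg hε.le k
  rcases hβ with rfl | rfl
  · constructor
    · -- lower bound, β = 1
      have hS : (0:ℝ) < (((1 + ε) ^ (1 + 2) / (1 - ε) ^ (1 + 3)) ^ 2 + 1) / 2 := by positivity
      rw [← Real.sqrt_mul hS.le]
      have hs : (0:ℝ) < ((((1 + ε) ^ (1 + 2) / (1 - ε) ^ (1 + 3)) ^ 2 + 1) / 2) * (1 + ε) := by
        positivity
      have key : (1 - 19*ε)^2*((1+ε)^9*((1+ε)^6+(1-ε)^8)) ≤ 2*(1-ε)^18 := by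
        linarith [H1 1, H1 2, H1 3, H1 4, H1 5, H1 6, H1 7, H1 8, H1 9, H1 10, H1 11, H1 12, H1 13, H1 14, H1 15, H1 16, H1 17, H1 18, P 2, P 3, P 4, P 5, P 6, P 7, P 8, P 9, P 10, P 11, P 12, P 13, P 14, P 15, P 16, P 17, P 18, P 19]
      have heq : ((1 - ε) / (1 + ε)) ^ (1 - 1) * ((1 - ε) ^ (1 + 2) / (1 + ε) ^ (1 + 3)) *
            ((1 - ε) / Real.sqrt (((((1 + ε) ^ (1 + 2) / (1 - ε) ^ (1 + 3)) ^ 2 + 1) / 2) * (1 + ε))) *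
            (1 - ε) ^ 1
          = ((1 - ε) ^ 5 / (1 + ε) ^ 4) /
              Real.sqrt (((((1 + ε) ^ (1 + 2) / (1 - ε) ^ (1 + 3)) ^ 2 + 1) / 2) * (1 + ε)) := by
        field_simp
        ring
      rw [heq]
      apply my_le_div_sqrt hs (by positivity) (by linarith)
      have hde : ((1 - ε) ^ 5 / (1 + ε) ^ 4) ^ 2
            - (1 - 19*ε) ^ 2 *
              (((((1 + ε) ^ (1 + 2) / (1 - ε) ^ (1 + 3)) ^ 2 + 1) / 2) * (1 + ε))
          = (2*(1-ε)^18 - (1 - 19*ε)^2*((1+ε)^9*((1+ε)^6+(1-ε)^8))) /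
              (2 * (1 - ε) ^ 8 * (1 + ε) ^ 8) := by
        field_simp
        ring
      have h0 : (0:ℝ) ≤ (2*(1-ε)^18 - (1 - 19*ε)^2*((1+ε)^9*((1+ε)^6+(1-ε)^8))) /
              (2 * (1 - ε) ^ 8 * (1 + ε) ^ 8) :=
        div_nonneg (by linarith) (by positivity)
      linarith [hde, h0]
    · -- upper bound, β = 1
      have hS : (0:ℝ) < (((1 - ε) ^ (1 + 2) / (1 + ε) ^ (1 + 3)) ^ 2 + 1) / 2 := by positivity
      rw [← Real.sqrt_mul hS.le]
      have hs : (0:ℝ) < ((((1 - ε) ^ (1 + 2) / (1 + ε) ^ (1 + 3)) ^ 2 + 1) / 2) * (1 - ε) := by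
        positivity
      have key : 2*(1+ε)^18 ≤ (1 + 19.00000950*ε)^2*((1-ε)^9*((1-ε)^6+(1+ε)^8)) := by
        linarith [H1 1, H1 2, H1 3, H1 4, H1 5, H1 6, H1 7, H1 8, H1 9, H1 10, H1 11, H1 12, H1 13, H1 14, H1 15, H1 16, H1 17, H1 18, P 2, P 3, P 4, P 5, P 6, P 7, P 8, P 9, P 10, P 11, P 12, P 13, P 14, P 15, P 16, P 17, P 18, P 19]
      have heq : ((1 + ε) / (1 - ε)) ^ (1 - 1) * ((1 + ε) ^ (1 + 2) / (1 - ε) ^ (1 + 3)) *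
            ((1 + ε) / Real.sqrt (((((1 - ε) ^ (1 + 2) / (1 + ε) ^ (1 + 3)) ^ 2 + 1) / 2) * (1 - ε))) *
            (1 + ε) ^ 1
          = ((1 + ε) ^ 5 / (1 - ε) ^ 4) /
              Real.sqrt (((((1 - ε) ^ (1 + 2) / (1 + ε) ^ (1 + 3)) ^ 2 + 1) / 2) * (1 - ε)) := by
        field_simp
        ring
      rw [heq]
      apply my_div_sqrt_le hs (by positivity) (by positivity)
      have hde : (1 + 19.00000950*ε) ^ 2 *
            (((((1 - ε) ^ (1 + 2) / (1 + ε) ^ (1 + 3)) ^ 2 + 1) / 2) * (1 - ε))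
            - ((1 + ε) ^ 5 / (1 - ε) ^ 4) ^ 2
          = ((1 + 19.00000950*ε)^2*((1-ε)^9*((1-ε)^6+(1+ε)^8)) - 2*(1+ε)^18) /
              (2 * (1 + ε) ^ 8 * (1 - ε) ^ 8) := by
        field_simp
        ring
      have h0 : (0:ℝ) ≤ ((1 + 19.00000950*ε)^2*((1-ε)^9*((1-ε)^6+(1+ε)^8)) - 2*(1+ε)^18) /
              (2 * (1 + ε) ^ 8 * (1 - ε) ^ 8) :=
        div_nonneg (by linarith) (by positivity)
      linarith [hde, h0]
  · constructor
    · -- lower bound, β = 2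
      have hS : (0:ℝ) < (((1 + ε) ^ (2 + 2) / (1 - ε) ^ (2 + 3)) ^ 2 + 1) / 2 := by positivity
      rw [← Real.sqrt_mul hS.le]
      have hs : (0:ℝ) < ((((1 + ε) ^ (2 + 2) / (1 - ε) ^ (2 + 3)) ^ 2 + 1) / 2) * (1 + ε) := by
        positivity
      have key : (1 - 19*ε)^2*((1+ε)^13*((1+ε)^8+(1-ε)^10)) ≤ 2*(1-ε)^26 := by
        linarith [H2 1, H2 2, H2 3, H2 4, H2 5, H2 6, H2 7, H2 8, H2 9, H2 10, H2 11, H2 12, H2 13, H2 14, H2 15, H2 16, H2 17, H2 18, H2 19, H2 20, H2 21, H2 22, H2 23, H2 24, P 2, P 3, P 4, P 5, P 6, P 7, P 8, P 9, P 10, P 11, P 12, P 13, P 14, P 15, P 16, P 17, P 18, P 19, P 20, P 21, P 22, P 23, P 24, P 25, P 26]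
      have heq : ((1 - ε) / (1 + ε)) ^ (2 - 1) * ((1 - ε) ^ (2 + 2) / (1 + ε) ^ (2 + 3)) *
            ((1 - ε) / Real.sqrt (((((1 + ε) ^ (2 + 2) / (1 - ε) ^ (2 + 3)) ^ 2 + 1) / 2) * (1 + ε))) *
            (1 - ε) ^ 2
          = ((1 - ε) ^ 8 / (1 + ε) ^ 6) /
              Real.sqrt (((((1 + ε) ^ (2 + 2) / (1 - ε) ^ (2 + 3)) ^ 2 + 1) / 2) * (1 + ε)) := by
        rw [show (2:ℕ) - 1 = 1 from rfl]
        field_simp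
        ring
      rw [heq]
      apply my_le_div_sqrt hs (by positivity) (by linarith)
      have hde : ((1 - ε) ^ 8 / (1 + ε) ^ 6) ^ 2
            - (1 - 19*ε) ^ 2 *
              (((((1 + ε) ^ (2 + 2) / (1 - ε) ^ (2 + 3)) ^ 2 + 1) / 2) * (1 + ε))
          = (2*(1-ε)^26 - (1 - 19*ε)^2*((1+ε)^13*((1+ε)^8+(1-ε)^10))) /
              (2 * (1 - ε) ^ 10 * (1 + ε) ^ 12) := by
        field_simp
        ring
      have h0 : (0:ℝ) ≤ (2*(1-ε)^26 - (1 - 19*ε)^2*((1+ε)^13*((1+ε)^8+(1-ε)^10))) /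
              (2 * (1 - ε) ^ 10 * (1 + ε) ^ 12) :=
        div_nonneg (by linarith) (by positivity)
      linarith [hde, h0]
    · -- upper bound, β = 2
      have hS : (0:ℝ) < (((1 - ε) ^ (2 + 2) / (1 + ε) ^ (2 + 3)) ^ 2 + 1) / 2 := by positivity
      rw [← Real.sqrt_mul hS.le]
      have hs : (0:ℝ) < ((((1 - ε) ^ (2 + 2) / (1 + ε) ^ (2 + 3)) ^ 2 + 1) / 2) * (1 - ε) := by
        positivity
      have key : 2*(1+ε)^26 ≤ (1 + 19.00000950*ε)^2*((1-ε)^13*((1-ε)^8+(1+ε)^10)) := by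
        linarith [H1 1, H1 2, H1 3, H1 4, H1 5, H1 6, H1 7, H1 8, H1 9, H1 10, H1 11, H1 12, H1 13, H1 14, H1 15, H1 16, H1 17, H1 18, H1 19, H1 20, H1 21, H1 22, H1 23, H1 24, H1 25, P 2, P 3, P 4, P 5, P 6, P 7, P 8, P 9, P 10, P 11, P 12, P 13, P 14, P 15, P 16, P 17, P 18, P 19, P 20, P 21, P 22, P 23, P 24, P 25, P 26]
      have heq : ((1 + ε) / (1 - ε)) ^ (2 - 1) * ((1 + ε) ^ (2 + 2) / (1 - ε) ^ (2 + 3)) *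
            ((1 + ε) / Real.sqrt (((((1 - ε) ^ (2 + 2) / (1 + ε) ^ (2 + 3)) ^ 2 + 1) / 2) * (1 - ε))) *
            (1 + ε) ^ 2
          = ((1 + ε) ^ 8 / (1 - ε) ^ 6) /
              Real.sqrt (((((1 - ε) ^ (2 + 2) / (1 + ε) ^ (2 + 3)) ^ 2 + 1) / 2) * (1 - ε)) := by
        rw [show (2:ℕ) - 1 = 1 from rfl]
        field_simp
        ring
      rw [heq]
      apply my_div_sqrt_le hs (by positivity) (by positivity)
      have hde : (1 + 19.00000950*ε) ^ 2 *
            (((((1 - ε) ^ (2 + 2) / (1 + ε) ^ (2 + 3)) ^ 2 + 1) / 2) * (1 - ε))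
            - ((1 + ε) ^ 8 / (1 - ε) ^ 6) ^ 2
          = ((1 + 19.00000950*ε)^2*((1-ε)^13*((1-ε)^8+(1+ε)^10)) - 2*(1+ε)^26) /
              (2 * (1 + ε) ^ 10 * (1 - ε) ^ 12) := by
        field_simp
        ring
      have h0 : (0:ℝ) ≤ ((1 + 19.00000950*ε)^2*((1-ε)^13*((1-ε)^8+(1+ε)^10)) - 2*(1+ε)^26) /
              (2 * (1 + ε) ^ 10 * (1 - ε) ^ 12) :=
        div_nonneg (by linarith) (by positivity)
      linarith [hde, h0]
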